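/- Consider the autonomous radial problem (54): (\varphi_p(u'))'(r) + ((n-1)/r)\varphi_p(u'(r)) + \lambda f(u(r)) = 0 on (0,1), u'(0)=u(1)=0, where \lambda > 0 is a parameter and f \in C^1([0,\infty)). Assume that f is either positive for all u > 0, or changes sign exactly once on (0,\infty), being negative for small u > 0 and positive for large u. If (\lambda_1,u_1) and (\lambda_2,u_2) are two pairs, each consisting of a positive parameter and a positive solution of (54) for that parameter, and u_1(0) = u_2(0), then \lambda_1 = \lambda_2 and u_1 \equiv u_2. -/

import Mathlib

open Set

/-- `φ_p(t) = t |t|^{p-2}` (real exponent), with `φ_p(0)=0`. -/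
noncomputable def phi (p t : ℝ) : ℝ := t * |t| ^ (p - 2)

/-- `φ_p'(t) = (p-1) |t|^{p-2}`. -/
noncomputable def phi' (p t : ℝ) : ℝ := (p - 1) * |t| ^ (p - 2)

/-- The derivative of a function on `[0,1]` (one-sided at the endpoints). -/
noncomputable def du (u : ℝ → ℝ) : ℝ → ℝ := derivWithin u (Set.Icc 0 1)

/-- A positive (classical) solution of the radial problem (30):
`(φ_p(u'))' + ((n-1)/r) φ_p(u') + f(r,u) = 0` on `(0,1)`, `u'(0) = u(1) = 0`,
with `u ∈ C^1[0,1]`, `φ_p ∘ u' ∈ C^1((0,1])`, and `u > 0` on `[0,1)`. -/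
structure RadialSol (p : ℝ) (n : ℕ) (f : ℝ → ℝ → ℝ) (u : ℝ → ℝ) : Prop where
  reg : ContDiffOn ℝ 1 u (Set.Icc 0 1)
  reg' : ContDiffOn ℝ 1 (fun r => phi p (du u r)) (Set.Ioc 0 1)
  pos : ∀ r ∈ Set.Ico (0:ℝ) 1, 0 < u r
  bc0 : du u 0 = 0
  bc1 : u 1 = 0
  ode : ∀ r ∈ Set.Ioo (0:ℝ) 1,
    deriv (fun s => phi p (du u s)) r + ((n : ℝ) - 1) / r * phi p (du u r) + f r (u r) = 0

/-- A solution of the linearized problem (31) at `u`: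
`(φ_p'(u') w')' + ((n-1)/r) φ_p'(u') w' + f_u(r,u) w = 0` on `(0,1)`, `w'(0) = w(1) = 0`. -/
structure LinSol (p : ℝ) (n : ℕ) (f : ℝ → ℝ → ℝ) (u w : ℝ → ℝ) : Prop where
  reg : ContDiffOn ℝ 1 w (Set.Icc 0 1)
  reg' : ContDiffOn ℝ 1 (fun r => phi' p (du u r) * du w r) (Set.Ioc 0 1)
  ode : ∀ r ∈ Set.Ioo (0:ℝ) 1,
    deriv (fun s => phi' p (du u s) * du w s) r
      + ((n : ℝ) - 1) / r * (phi' p (du u r) * du w r) + deriv (f r) (u r) * w r = 0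
  bc0 : du w 0 = 0
  bc1 : w 1 = 0

open Filter Topology

/-! ### Part A : basic facts about `phi` -/

lemma phi_zero (p : ℝ) : phi p 0 = 0 := by simp [phi]

lemma abs_phi {p : ℝ} (hp : 1 < p) (t : ℝ) : |phi p t| = |t| ^ (p - 1) := by
  rcases eq_or_ne t 0 with rfl | ht
  · rw [phi_zero]; simp [Real.zero_rpow (by linarith : p - 1 ≠ 0)]
  · have h0 : (0:ℝ) < |t| := abs_pos.2 ht
    rw [phi, abs_mul, Real.abs_rpow_of_nonneg (abs_nonneg t), abs_abs]
    rw [show p - 1 = 1 + (p - 2) by ring, Real.rpow_add h0, Real.rpow_one]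

lemma phi_neg_of_neg {p : ℝ} (hp : 1 < p) {t : ℝ} (ht : t < 0) : phi p t < 0 :=
  mul_neg_of_neg_of_pos ht (Real.rpow_pos_of_pos (abs_pos.2 ht.ne) _)

lemma phi_nonneg_of_nonneg {p : ℝ} {t : ℝ} (ht : 0 ≤ t) : 0 ≤ phi p t :=
  mul_nonneg ht (Real.rpow_nonneg (abs_nonneg t) _)

lemma neg_of_phi_neg {p : ℝ} {t : ℝ} (ht : phi p t < 0) : t < 0 := by
  by_contra h
  exact absurd (phi_nonneg_of_nonneg (not_lt.1 h)) (not_le.2 ht)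

lemma phi_eq_neg {p : ℝ} (hp : 1 < p) {t : ℝ} (ht : t < 0) : phi p t = -(|t| ^ (p - 1)) := by
  have := abs_phi hp t
  rcases abs_cases (phi p t) with ⟨h1, _⟩ | ⟨h1, _⟩
  · nlinarith [phi_neg_of_neg hp ht, Real.rpow_nonneg (abs_nonneg t) (p-1)]
  · linarith

lemma mul_phi_nonneg (p : ℝ) (t : ℝ) : 0 ≤ t * phi p t := by
  rw [phi, ← mul_assoc]
  exact mul_nonneg (mul_self_nonneg t) (Real.rpow_nonneg (abs_nonneg t) _)

lemma phi_comp {p : ℝ} (hp : 1 < p) (t : ℝ) : phi (p / (p-1)) (phi p t) = t := by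
  rcases eq_or_ne t 0 with rfl | ht
  · rw [phi_zero, phi_zero]
  · have h0 : (0:ℝ) < |t| := abs_pos.2 ht
    have hp1 : p - 1 ≠ 0 := by linarith
    rw [phi, abs_phi hp, phi, ← Real.rpow_mul (abs_nonneg t), mul_assoc,
      ← Real.rpow_add h0]
    have he : (p-2) + (p-1)*(p/(p-1)-2) = 0 := by field_simp; ring
    rw [he, Real.rpow_zero, mul_one]

lemma continuous_phi {p : ℝ} (hp : 1 < p) : Continuous (phi p) := by
  rw [continuous_iff_continuousAt]
  intro x
  rcases eq_or_ne x 0 with rfl | hx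
  · rw [ContinuousAt, phi_zero]
    have h1 : ContinuousAt (fun y : ℝ => y ^ (p-1)) (|(0:ℝ)|) := by
      simpa using Real.continuousAt_rpow_const 0 (p-1) (Or.inr (by linarith))
    have habs : Tendsto (fun t : ℝ => |t| ^ (p-1)) (𝓝 0) (𝓝 0) := by
      have := h1.comp continuous_abs.continuousAt
      simpa [ContinuousAt, abs_zero, Real.zero_rpow (by linarith : p - 1 ≠ 0), Function.comp_def]
        using this
    apply squeeze_zero_norm _ habs
    intro t
    rw [Real.norm_eq_abs, abs_phi hp t]
  · exact continuousAt_id.mul (((Real.continuousAt_rpow_const (|x|) (p-2)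
      (Or.inl (abs_ne_zero.2 hx)))).comp continuous_abs.continuousAt)

/-! ### Part B : calculus helpers -/

lemma hasDerivAt_abs_rpow' {q : ℝ} (hq : 1 < q) (x : ℝ) :
    HasDerivAt (fun t : ℝ => |t| ^ q) (q * phi q x) x := by
  have := hasDerivAt_abs_rpow x hq
  convert this using 1
  rw [phi]; ring

lemma hasDerivAt_phi_neg {q : ℝ} (hq : 1 < q) {x : ℝ} (hx : x < 0) :
    HasDerivAt (phi q) ((q-1) * |x| ^ (q-2)) x := by
  have hx' : -x > 0 := by linarith
  have h1 : HasDerivAt (fun t : ℝ => -t) (-1) x := (hasDerivAt_id x).neg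
  have h2 : HasDerivAt (fun y : ℝ => y ^ (q-1)) ((q-1) * (-x) ^ (q-2)) (-x) := by
    have := Real.hasDerivAt_rpow_const (x := -x) (p := q-1) (Or.inl hx'.ne')
    convert this using 2
    ring
  have h3 : HasDerivAt (fun t : ℝ => -((-t) ^ (q-1))) (-((q-1) * (-x) ^ (q-2) * (-1))) x :=
    (h2.comp x h1).neg
  have h4 : phi q =ᶠ[𝓝 x] (fun t : ℝ => -((-t) ^ (q-1))) := by
    filter_upwards [Iio_mem_nhds hx] with t ht
    rw [phi_eq_neg hq ht, abs_of_neg ht]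
  rw [Filter.EventuallyEq.hasDerivAt_iff h4]
  refine h3.congr_deriv ?_
  symm
  rw [abs_of_neg hx]
  ring

lemma rpow_le_add {c A t B : ℝ} (hA : 0 < A) (h1 : A ≤ t) (h2 : t ≤ B) :
    t ^ c ≤ A ^ c + B ^ c := by
  rcases le_or_gt 0 c with hc | hc
  · have : t ^ c ≤ B ^ c := Real.rpow_le_rpow (by linarith) h2 hc
    have hA' : (0:ℝ) ≤ A ^ c := Real.rpow_nonneg hA.le c
    linarith
  · have : t ^ c ≤ A ^ c := Real.rpow_le_rpow_of_nonpos hA h1 hc.le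
    have hB' : (0:ℝ) ≤ B ^ c := Real.rpow_nonneg (by linarith) c
    linarith

lemma phi_sub_le {q : ℝ} (hq : 1 < q) {A B x y : ℝ} (hA : 0 < A)
    (hx : x ∈ Icc (-B) (-A)) (hy : y ∈ Icc (-B) (-A)) :
    |phi q x - phi q y| ≤ (q-1) * (A ^ (q-2) + B ^ (q-2)) * |x - y| := by
  have hAB : A ≤ B := by
    have := hx.1.trans hx.2; linarith
  have key : ∀ z ∈ Icc (-B) (-A), ‖(q-1) * |z| ^ (q-2)‖ ≤ (q-1) * (A ^ (q-2) + B ^ (q-2)) := by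
    intro z hz
    have hz1 : A ≤ |z| := by
      rcases hz with ⟨h1, h2⟩
      rw [abs_of_neg (by linarith : z < 0)]; linarith
    have hz2 : |z| ≤ B := by
      rcases hz with ⟨h1, h2⟩
      rw [abs_of_neg (by linarith : z < 0)]; linarith
    rw [Real.norm_eq_abs, abs_mul, abs_of_nonneg (by linarith : (0:ℝ) ≤ q - 1),
      abs_of_nonneg (Real.rpow_nonneg (abs_nonneg z) _)]
    exact mul_le_mul_of_nonneg_left (rpow_le_add hA hz1 hz2) (by linarith)
  have := Convex.norm_image_sub_le_of_norm_hasDerivWithin_le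
    (f := phi q) (f' := fun z => (q-1) * |z| ^ (q-2)) (s := Icc (-B) (-A))
    (fun z hz => (hasDerivAt_phi_neg hq (by rcases hz with ⟨h1,h2⟩; linarith)).hasDerivWithinAt)
    key (convex_Icc _ _) hy hx
  calc |phi q x - phi q y| = ‖phi q x - phi q y‖ := (Real.norm_eq_abs _).symm
    _ ≤ (q-1) * (A ^ (q-2) + B ^ (q-2)) * ‖x - y‖ := this
    _ = (q-1) * (A ^ (q-2) + B ^ (q-2)) * |x - y| := by rw [Real.norm_eq_abs]

/-- comparison: a function with nonpositive derivative on `Ioo a b` is `≤ h a` on `[a,b]`. -/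
lemma le_self_of_deriv_nonpos {h h' : ℝ → ℝ} {a b : ℝ}
    (hc : ContinuousOn h (Icc a b))
    (hder : ∀ r ∈ Ioo a b, HasDerivAt h (h' r) r)
    (hneg : ∀ r ∈ Ioo a b, h' r ≤ 0) :
    ∀ r ∈ Icc a b, h r ≤ h a := by
  rcases le_or_gt b a with hab | hab
  · intro r hr
    have : r = a := le_antisymm (hr.2.trans hab) hr.1
    rw [this]
  · have hanti : AntitoneOn h (Icc a b) := by
      apply antitoneOn_of_deriv_nonpos (convex_Icc a b) hc
      · intro x hx
        rw [interior_Icc] at hx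
        exact (hder x hx).differentiableAt.differentiableWithinAt
      · intro x hx
        rw [interior_Icc] at hx
        rw [(hder x hx).deriv]
        exact hneg x hx
    intro r hr
    exact hanti (left_mem_Icc.2 hab.le) hr hr.1

lemma lt_self_of_deriv_neg {h h' : ℝ → ℝ} {a b : ℝ} (hab : a < b)
    (hc : ContinuousOn h (Icc a b))
    (hder : ∀ r ∈ Ioo a b, HasDerivAt h (h' r) r)
    (hneg : ∀ r ∈ Ioo a b, h' r < 0) :
    h b < h a := by
  have hanti : StrictAntiOn h (Icc a b) := by
    apply strictAntiOn_of_deriv_neg (convex_Icc a b) hc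
    intro x hx
    rw [interior_Icc] at hx
    rw [(hder x hx).deriv]
    exact hneg x hx
  exact hanti (left_mem_Icc.2 hab.le) (right_mem_Icc.2 hab.le) hab

/-- two functions continuous within a set at a limit point agree at the point if they
agree on the set. -/
lemma eq_at_of_eqOn {u v : ℝ → ℝ} {s : Set ℝ} {x : ℝ}
    (hu : ContinuousWithinAt u s x) (hv : ContinuousWithinAt v s x)
    (hne : (𝓝[s] x).NeBot) (h : EqOn u v s) : u x = v x := by
  have heq : u =ᶠ[𝓝[s] x] v := eventually_nhdsWithin_of_forall h
  exact tendsto_nhds_unique (hu.tendsto.congr' heq) hv.tendsto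

/-! ### Part C : the primitive `Fint` -/

noncomputable def fc (f : ℝ → ℝ) : ℝ → ℝ := fun t => f (max t 0)

noncomputable def Fint (f : ℝ → ℝ) : ℝ → ℝ := fun t => ∫ s in (0:ℝ)..t, fc f s

lemma continuous_fc {f : ℝ → ℝ} (hf : ContinuousOn f (Ici 0)) : Continuous (fc f) := by
  have := hf.comp_continuous (continuous_id.max continuous_const)
    (fun x => mem_Ici.2 (le_max_right x 0))
  exact this

lemma fc_eq {f : ℝ → ℝ} {t : ℝ} (ht : 0 ≤ t) : fc f t = f t := by
  rw [fc, max_eq_left ht]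

lemma hasDerivAt_Fint {f : ℝ → ℝ} (hf : ContinuousOn f (Ici 0)) (y : ℝ) :
    HasDerivAt (Fint f) (fc f y) y :=
  ((continuous_fc hf).integral_hasStrictDerivAt 0 y).hasDerivAt

lemma continuous_Fint {f : ℝ → ℝ} (hf : ContinuousOn f (Ici 0)) : Continuous (Fint f) := by
  rw [continuous_iff_continuousAt]
  exact fun y => (hasDerivAt_Fint hf y).continuousAt

lemma Fint_zero (f : ℝ → ℝ) : Fint f 0 = 0 := intervalIntegral.integral_same

lemma Fint_neg {f : ℝ → ℝ} (hf : ContinuousOn f (Ici 0)) {γ : ℝ}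
    (hneg : ∀ v ∈ Ioo (0:ℝ) γ, f v < 0) {c : ℝ} (hc : c ∈ Ioc (0:ℝ) γ) :
    Fint f c < 0 := by
  have h : 0 < ∫ s in (0:ℝ)..c, (-(fc f s)) := by
    apply intervalIntegral.intervalIntegral_pos_of_pos_on
    · exact ((continuous_fc hf).neg).intervalIntegrable 0 c
    · intro s hs
      have hs0 : 0 < s := hs.1
      have : f s < 0 := hneg s ⟨hs0, lt_of_lt_of_le hs.2 hc.2⟩
      rw [fc_eq hs0.le]
      linarith
    · exact hc.1
  rw [intervalIntegral.integral_neg] at h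
  have : Fint f c = ∫ s in (0:ℝ)..c, fc f s := rfl
  linarith

/-! ### Part D : solutions -/

/-- A bundled "nice solution" of the IVP on `[0,1]`. -/
structure Sol (p : ℝ) (n : ℕ) (lam : ℝ) (f : ℝ → ℝ) (d : ℝ) (u u' : ℝ → ℝ) : Prop where
  cont : ContinuousOn u (Icc 0 1)
  cont' : ContinuousOn u' (Icc 0 1)
  hd : ∀ r ∈ Ioo (0:ℝ) 1, HasDerivAt u (u' r) r
  init : u 0 = d
  init' : u' 0 = 0
  mem : ∀ r ∈ Icc (0:ℝ) 1, u r ∈ Icc 0 d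
  neg : ∀ r ∈ Ioo (0:ℝ) 1, u' r < 0
  hQ : ∀ r ∈ Ioo (0:ℝ) 1, HasDerivAt (fun s => phi p (u' s))
        (-(((n:ℝ) - 1) / r) * phi p (u' r) - lam * f (u r)) r

section D

variable {p lam : ℝ} {n : ℕ} {f u u' : ℝ → ℝ}

lemma psi_deriv (hn : 1 ≤ n)
    (hQ : ∀ r ∈ Ioo (0:ℝ) 1, HasDerivAt (fun s => phi p (u' s))
        (-(((n:ℝ) - 1) / r) * phi p (u' r) - lam * f (u r)) r)
    {r : ℝ} (hr : r ∈ Ioo (0:ℝ) 1) :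
    HasDerivAt (fun s => s^(n-1) * phi p (u' s))
      (-(lam * f (u r)) * r^(n-1)) r := by
  have h1 : HasDerivAt (fun s : ℝ => s^(n-1)) (((n-1 : ℕ) : ℝ) * r^(n-2)) r := by
    have := hasDerivAt_pow (n-1) r
    rw [show n - 1 - 1 = n - 2 by omega] at this
    exact this
  have h2 := hQ r hr
  have h3 := h1.mul h2
  refine h3.congr_deriv ?_
  symm
  rcases Nat.lt_or_ge n 2 with h | h
  · have hn1 : n = 1 := by omega
    subst hn1
    simp
    try ring
  · have hr0 : r ≠ 0 := ne_of_gt hr.1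
    have hpow : r^(n-1) = r^(n-2) * r := by
      rw [← pow_succ]
      congr 1
      omega
    have hcast : ((n-1:ℕ):ℝ) = (n:ℝ) - 1 := by
      push_cast [Nat.cast_sub (by omega : 1 ≤ n)]
      try ring
    rw [hpow, hcast]
    field_simp
    ring

lemma psi_le (hp : 1 < p) (hn : 1 ≤ n) (hlam : 0 < lam)
    (cont' : ContinuousOn u' (Icc 0 1)) (init' : u' 0 = 0)
    (hQ : ∀ r ∈ Ioo (0:ℝ) 1, HasDerivAt (fun s => phi p (u' s))
        (-(((n:ℝ) - 1) / r) * phi p (u' r) - lam * f (u r)) r)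
    {R m : ℝ} (hR0 : 0 < R) (hR1 : R ≤ 1)
    (hm : ∀ s ∈ Icc (0:ℝ) R, m ≤ f (u s)) :
    ∀ r ∈ Icc (0:ℝ) R, r^(n-1) * phi p (u' r) ≤ -(lam * m / n) * r^n := by
  have hIcc : Icc (0:ℝ) R ⊆ Icc 0 1 := Icc_subset_Icc le_rfl hR1
  have hIoo : Ioo (0:ℝ) R ⊆ Ioo 0 1 := Ioo_subset_Ioo le_rfl hR1
  have hn0 : ((n:ℝ)) ≠ 0 := by positivity
  have key := le_self_of_deriv_nonpos
    (h := fun r => r^(n-1) * phi p (u' r) + (lam * m / n) * r^n)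
    (h' := fun r => -(lam * f (u r)) * r^(n-1) + (lam * m / n) * ((n:ℝ) * r^(n-1)))
    (a := 0) (b := R)
    (by
      apply ContinuousOn.add
      · exact (continuousOn_pow _).mul
          (((continuous_phi hp).comp_continuousOn (cont'.mono hIcc)))
      · exact continuousOn_const.mul (continuousOn_pow _))
    (by
      intro r hr
      exact (psi_deriv hn hQ (hIoo hr)).add ((hasDerivAt_pow n r).const_mul _))
    (by
      intro r hr
      have h1 : m ≤ f (u r) := hm r ⟨hr.1.le, hr.2.le⟩
      have h2 : (0:ℝ) ≤ r^(n-1) := pow_nonneg hr.1.le _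
      show -(lam * f (u r)) * r^(n-1) + (lam * m / n) * ((n:ℝ) * r^(n-1)) ≤ 0
      have h3 : (lam * m / n) * ((n:ℝ) * r^(n-1)) = lam * m * r^(n-1) := by
        field_simp
      rw [h3]
      have key2 : 0 ≤ lam * (f (u r) - m) * r^(n-1) :=
        mul_nonneg (mul_nonneg hlam.le (by linarith)) h2
      have heq : -(lam * f (u r)) * r^(n-1) + lam * m * r^(n-1)
          = -(lam * (f (u r) - m) * r^(n-1)) := by ring
      rw [heq]
      linarith)
  intro r hr
  have := key r hr
  simp only [init', phi_zero, mul_zero, zero_pow (by omega : n ≠ 0), zero_mul,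
    add_zero, zero_add] at this
  linarith

lemma psi_ge (hp : 1 < p) (hn : 1 ≤ n) (hlam : 0 < lam)
    (cont' : ContinuousOn u' (Icc 0 1)) (init' : u' 0 = 0)
    (hQ : ∀ r ∈ Ioo (0:ℝ) 1, HasDerivAt (fun s => phi p (u' s))
        (-(((n:ℝ) - 1) / r) * phi p (u' r) - lam * f (u r)) r)
    {R M : ℝ} (hR0 : 0 < R) (hR1 : R ≤ 1)
    (hM : ∀ s ∈ Icc (0:ℝ) R, f (u s) ≤ M) :
    ∀ r ∈ Icc (0:ℝ) R, -(lam * M / n) * r^n ≤ r^(n-1) * phi p (u' r) := by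
  have hIcc : Icc (0:ℝ) R ⊆ Icc 0 1 := Icc_subset_Icc le_rfl hR1
  have hIoo : Ioo (0:ℝ) R ⊆ Ioo 0 1 := Ioo_subset_Ioo le_rfl hR1
  have hn0 : ((n:ℝ)) ≠ 0 := by positivity
  have key := le_self_of_deriv_nonpos
    (h := fun r => -(r^(n-1) * phi p (u' r)) - (lam * M / n) * r^n)
    (h' := fun r => -(-(lam * f (u r)) * r^(n-1)) - (lam * M / n) * ((n:ℝ) * r^(n-1)))
    (a := 0) (b := R)
    (by
      apply ContinuousOn.sub
      · exact ((continuousOn_pow _).mul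
          (((continuous_phi hp).comp_continuousOn (cont'.mono hIcc)))).neg
      · exact continuousOn_const.mul (continuousOn_pow _))
    (by
      intro r hr
      exact ((psi_deriv hn hQ (hIoo hr)).neg).sub ((hasDerivAt_pow n r).const_mul _))
    (by
      intro r hr
      have h1 : f (u r) ≤ M := hM r ⟨hr.1.le, hr.2.le⟩
      have h2 : (0:ℝ) ≤ r^(n-1) := pow_nonneg hr.1.le _
      show -(-(lam * f (u r)) * r^(n-1)) - (lam * M / n) * ((n:ℝ) * r^(n-1)) ≤ 0
      have h3 : (lam * M / n) * ((n:ℝ) * r^(n-1)) = lam * M * r^(n-1) := by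
        field_simp
      rw [h3]
      have key2 : 0 ≤ lam * (M - f (u r)) * r^(n-1) :=
        mul_nonneg (mul_nonneg hlam.le (by linarith)) h2
      have heq : -(-(lam * f (u r)) * r^(n-1)) - lam * M * r^(n-1)
          = -(lam * (M - f (u r)) * r^(n-1)) := by ring
      rw [heq]
      linarith)
  intro r hr
  have := key r hr
  simp only [init', phi_zero, mul_zero, zero_pow (by omega : n ≠ 0), zero_mul,
    sub_zero, neg_zero, zero_sub, zero_add] at this
  linarith

lemma energy_antitone (hp : 1 < p) (hn : 1 ≤ n) (hlam : 0 < lam)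
    (hf : ContinuousOn f (Ici 0))
    (cont : ContinuousOn u (Icc 0 1)) (cont' : ContinuousOn u' (Icc 0 1))
    (hd : ∀ r ∈ Ioo (0:ℝ) 1, HasDerivAt u (u' r) r)
    (hQ : ∀ r ∈ Ioo (0:ℝ) 1, HasDerivAt (fun s => phi p (u' s))
        (-(((n:ℝ) - 1) / r) * phi p (u' r) - lam * f (u r)) r)
    (hpos : ∀ r ∈ Icc (0:ℝ) 1, 0 ≤ u r) :
    AntitoneOn (fun r => (p-1)/p * |phi p (u' r)| ^ (p/(p-1)) + lam * Fint f (u r))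
      (Icc 0 1) := by
  set q : ℝ := p/(p-1) with hq_def
  have hp1 : (0:ℝ) < p - 1 := by linarith
  have hq : 1 < q := by
    rw [hq_def, lt_div_iff₀ hp1]
    linarith
  have habs : Continuous (fun t : ℝ => |t| ^ q) := by
    rw [continuous_iff_continuousAt]
    exact fun y => (hasDerivAt_abs_rpow' hq y).continuousAt
  have hEderiv : ∀ x ∈ Ioo (0:ℝ) 1,
      HasDerivAt (fun r => (p-1)/p * |phi p (u' r)| ^ q + lam * Fint f (u r))
        (-(((n:ℝ)-1)/x) * (u' x * phi p (u' x))) x := by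
    intro x hx
    have h1 : HasDerivAt (fun r => |phi p (u' r)| ^ q)
        (q * phi q (phi p (u' x)) * (-(((n:ℝ) - 1) / x) * phi p (u' x) - lam * f (u x))) x := by
      have := (hasDerivAt_abs_rpow' hq (phi p (u' x))).comp x (hQ x hx)
      exact this
    have h2 : HasDerivAt (fun r => Fint f (u r)) (fc f (u x) * u' x) x :=
      (hasDerivAt_Fint hf (u x)).comp x (hd x hx)
    have h3 := (h1.const_mul ((p-1)/p)).add (h2.const_mul lam)
    refine h3.congr_deriv ?_
    symm
    have hqc : phi q (phi p (u' x)) = u' x := by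
      rw [hq_def]; exact phi_comp hp _
    rw [hqc, fc_eq (hpos x ⟨hx.1.le, hx.2.le⟩)]
    have hc : (p-1)/p * q = 1 := by
      rw [hq_def]
      field_simp
    linear_combination (-(u' x * (-(((n:ℝ)-1)/x) * phi p (u' x) - lam * f (u x)))) * hc
  apply antitoneOn_of_deriv_nonpos (convex_Icc 0 1)
  · apply ContinuousOn.add
    · exact continuousOn_const.mul
        ((habs.comp (continuous_phi hp)).comp_continuousOn cont')
    · exact continuousOn_const.mul ((continuous_Fint hf).comp_continuousOn cont)
  · intro x hx
    rw [interior_Icc] at hx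
    exact (hEderiv x hx).differentiableAt.differentiableWithinAt
  · intro x hx
    rw [interior_Icc] at hx
    rw [(hEderiv x hx).deriv]
    have h1 : (0:ℝ) ≤ ((n:ℝ)-1)/x := by
      apply div_nonneg _ hx.1.le
      have : (1:ℝ) ≤ (n:ℝ) := by exact_mod_cast hn
      linarith
    have h2 := mul_phi_nonneg p (u' x)
    have := mul_nonneg h1 h2
    linarith

end D

/-! ### Part E : from `RadialSol` to `Sol` -/

lemma radial_to_sol {p lam : ℝ} {n : ℕ} {f u : ℝ → ℝ}
    (hp : 1 < p) (hn : 1 ≤ n) (hlam : 0 < lam)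
    (hfC : ContinuousOn f (Ici 0))
    {γ : ℝ} (hfpos : ∀ v, γ < v → 0 < f v)
    (hFneg : ∀ c ∈ Ioc (0:ℝ) γ, Fint f c < 0)
    (hu : RadialSol p n (fun _ v => lam * f v) u) :
    Sol p n lam f (u 0) u (du u) ∧ 0 < f (u 0) := by
  have hp1 : (0:ℝ) < p - 1 := by linarith
  have hd0 : 0 < u 0 := hu.pos 0 ⟨le_rfl, one_pos⟩
  -- basics
  have ucont : ContinuousOn u (Icc 0 1) := hu.reg.continuousOn
  have ucont' : ContinuousOn (du u) (Icc 0 1) :=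
    hu.reg.continuousOn_derivWithin (uniqueDiffOn_Icc one_pos) le_rfl
  have uhd : ∀ r ∈ Ioo (0:ℝ) 1, HasDerivAt u (du u r) r := by
    intro r hr
    have hmem : Icc (0:ℝ) 1 ∈ 𝓝 r := Icc_mem_nhds hr.1 hr.2
    have hdiff := (hu.reg.differentiableOn one_ne_zero r ⟨hr.1.le, hr.2.le⟩).differentiableAt hmem
    have heq : du u r = deriv u r := derivWithin_of_mem_nhds hmem
    rw [heq]
    exact hdiff.hasDerivAt
  have uhQ : ∀ r ∈ Ioo (0:ℝ) 1, HasDerivAt (fun s => phi p (du u s))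
      (-(((n:ℝ) - 1) / r) * phi p (du u r) - lam * f (u r)) r := by
    intro r hr
    have hmem : Ioc (0:ℝ) 1 ∈ 𝓝 r := Ioc_mem_nhds hr.1 hr.2
    have hdiff := (hu.reg'.differentiableOn one_ne_zero r ⟨hr.1, hr.2.le⟩).differentiableAt hmem
    have hode : deriv (fun s => phi p (du u s)) r + ((n:ℝ) - 1)/r * phi p (du u r)
        + lam * f (u r) = 0 := hu.ode r hr
    have heq : -(((n:ℝ) - 1) / r) * phi p (du u r) - lam * f (u r)
        = deriv (fun s => phi p (du u s)) r := by linarith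
    rw [heq]
    exact hdiff.hasDerivAt
  have upos : ∀ r ∈ Icc (0:ℝ) 1, 0 ≤ u r := by
    intro r hr
    rcases lt_or_eq_of_le hr.2 with h | h
    · exact (hu.pos r ⟨hr.1, h⟩).le
    · rw [h, hu.bc1]
  -- energy
  set E : ℝ → ℝ := fun r => (p-1)/p * |phi p (du u r)| ^ (p/(p-1)) + lam * Fint f (u r)
    with hE_def
  have hE : AntitoneOn E (Icc 0 1) :=
    energy_antitone hp hn hlam hfC ucont ucont' uhd uhQ upos
  have hqne : p/(p-1) ≠ 0 := by positivity
  have hE0 : E 0 = lam * Fint f (u 0) := by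
    rw [hE_def]
    simp [hu.bc0, phi_zero, Real.zero_rpow hqne]
  have hE1 : 0 ≤ E 1 := by
    rw [hE_def]
    simp only [hu.bc1, Fint_zero, mul_zero, add_zero]
    positivity
  have hE10 : E 1 ≤ E 0 := hE ⟨le_rfl, zero_le_one⟩ ⟨zero_le_one, le_rfl⟩ zero_le_one
  have hFd : 0 ≤ Fint f (u 0) := by
    by_contra h
    push_neg at h
    have := mul_neg_of_pos_of_neg hlam h
    linarith
  have hdγ : γ < u 0 := by
    by_contra h
    push_neg at h
    exact absurd hFd (not_le.2 (hFneg (u 0) ⟨hd0, h⟩))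
  have hfd : 0 < f (u 0) := hfpos _ hdγ
  -- a small radius on which `u' < 0`
  set m : ℝ := f (u 0) / 2 with hm_def
  have hm0 : 0 < m := by rw [hm_def]; linarith
  have hcfu : ContinuousWithinAt (fun s => f (u s)) (Icc 0 1) 0 := by
    apply ContinuousAt.comp_continuousWithinAt
    · exact hfC.continuousAt (Ici_mem_nhds hd0)
    · exact ucont 0 ⟨le_rfl, zero_le_one⟩
  have hev : ∀ᶠ s in 𝓝[Icc (0:ℝ) 1] 0, m < f (u s) :=
    Filter.Tendsto.eventually hcfu (eventually_gt_nhds (by rw [hm_def]; linarith))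
  obtain ⟨δ, hδ0, hδ'⟩ := Metric.mem_nhdsWithin_iff.mp hev
  have hδ : ∀ s, s ∈ Icc (0:ℝ) 1 → dist s 0 < δ → m < f (u s) := by
    intro s hs1 hs2
    exact hδ' ⟨Metric.mem_ball.mpr hs2, hs1⟩
  set R : ℝ := min (δ/2) (1/2) with hR_def
  have hR0 : 0 < R := lt_min (by linarith) one_half_pos
  have hR1 : R ≤ 1 := le_trans (min_le_right _ _) (by norm_num)
  have hmR : ∀ s ∈ Icc (0:ℝ) R, m ≤ f (u s) := by
    intro s hs
    have hs1 : s ∈ Icc (0:ℝ) 1 := ⟨hs.1, hs.2.trans hR1⟩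
    have hdist : dist s 0 < δ := by
      rw [Real.dist_eq, sub_zero, abs_of_nonneg hs.1]
      have h2 := hs.2.trans (min_le_left (δ/2) (1/2))
      linarith
    exact (hδ s hs1 hdist).le
  have hψ := psi_le hp hn hlam ucont' hu.bc0 uhQ hR0 hR1 hmR
  have huneg' : ∀ r ∈ Ioc (0:ℝ) R, du u r < 0 := by
    intro r hr
    have h1 := hψ r ⟨hr.1.le, hr.2⟩
    have h2 : (0:ℝ) < r^n := pow_pos hr.1 n
    have h3 : r^(n-1) * phi p (du u r) < 0 := by
      have hpos2 : 0 < lam * m / n * r^n := by positivity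
      have : -(lam * m / ↑n) * r ^ n < 0 := by linarith
      linarith
    have h4 : (0:ℝ) < r^(n-1) := pow_pos hr.1 _
    have hQneg : phi p (du u r) < 0 := by
      by_contra hcq
      push_neg at hcq
      nlinarith [mul_nonneg h4.le hcq]
    exact neg_of_phi_neg hQneg
  -- the main claim : u' < 0 on (0,1)
  have hneg : ∀ r ∈ Ioo (0:ℝ) 1, du u r < 0 := by
    by_contra hcon
    push_neg at hcon
    obtain ⟨r', hr', hr'0⟩ := hcon
    set S : Set ℝ := {r | r ∈ Ioo (0:ℝ) 1 ∧ 0 ≤ du u r} with hS_def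
    have hSne : S.Nonempty := ⟨r', hr', hr'0⟩
    have hSlb : ∀ s ∈ S, R ≤ s := by
      intro s hs
      by_contra hsR
      push_neg at hsR
      exact absurd hs.2 (not_le.2 (huneg' s ⟨hs.1.1, hsR.le⟩))
    have hSbdd : BddBelow S := ⟨R, hSlb⟩
    set r₀ : ℝ := sInf S with hr₀_def
    have hr₀R : R ≤ r₀ := le_csInf hSne hSlb
    have hr₀0 : 0 < r₀ := lt_of_lt_of_le hR0 hr₀R
    have hr₀1 : r₀ < 1 := lt_of_le_of_lt (csInf_le hSbdd ⟨hr', hr'0⟩) hr'.2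
    have hcontAt : ContinuousAt (du u) r₀ :=
      ucont'.continuousAt (Icc_mem_nhds hr₀0 hr₀1)
    have hbelow : ∀ s ∈ Ioo (0:ℝ) r₀, du u s < 0 := by
      intro s hs
      by_contra hc
      push_neg at hc
      have hsS : s ∈ S := ⟨⟨hs.1, hs.2.trans hr₀1⟩, hc⟩
      exact absurd (csInf_le hSbdd hsS) (not_le.2 hs.2)
    have hup : 0 ≤ du u r₀ := by
      by_contra hc
      push_neg at hc
      have hev2 : ∀ᶠ y in 𝓝 r₀, du u y < 0 :=
        (hcontAt.eventually_mem (Iio_mem_nhds hc)).mono (fun y hy => hy)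
      obtain ⟨ε, hε0, hε'⟩ := Metric.mem_nhds_iff.mp hev2
      have hε : ∀ y, dist y r₀ < ε → du u y < 0 := by
        intro y hy
        exact hε' (Metric.mem_ball.mpr hy)
      have hlb2 : ∀ s ∈ S, r₀ + ε ≤ s := by
        intro s hs
        by_contra hcs
        push_neg at hcs
        have hsge : r₀ ≤ s := csInf_le hSbdd hs
        have hd2 : dist s r₀ < ε := by
          rw [Real.dist_eq, abs_of_nonneg (by linarith)]
          linarith
        exact absurd hs.2 (not_le.2 (hε s hd2))
      have := le_csInf hSne hlb2
      linarith
    have hdown : du u r₀ ≤ 0 := by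
      haveI hNB : (𝓝[Ioo (0:ℝ) r₀] r₀).NeBot := by
        apply mem_closure_iff_nhdsWithin_neBot.mp
        rw [closure_Ioo (ne_of_lt hr₀0)]
        exact ⟨hr₀0.le, le_rfl⟩
      have htd : Tendsto (du u) (𝓝[Ioo (0:ℝ) r₀] r₀) (𝓝 (du u r₀)) :=
        hcontAt.tendsto.mono_left nhdsWithin_le_nhds
      apply le_of_tendsto htd
      filter_upwards [self_mem_nhdsWithin] with s hs
      exact (hbelow s hs).le
    have hzero : du u r₀ = 0 := le_antisymm hdown hup
    have huanti : StrictAntiOn u (Icc 0 r₀) := by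
      apply strictAntiOn_of_deriv_neg (convex_Icc _ _)
        (ucont.mono (Icc_subset_Icc le_rfl hr₀1.le))
      intro x hx
      rw [interior_Icc] at hx
      have hx1 : x ∈ Ioo (0:ℝ) 1 := ⟨hx.1, hx.2.trans hr₀1⟩
      rw [(uhd x hx1).deriv]
      exact hbelow x hx
    have hc0 : 0 < u r₀ := hu.pos r₀ ⟨hr₀0.le, hr₀1⟩
    rcases le_or_gt (u r₀) γ with hcγ | hcγ
    · -- energy contradiction
      have hEr₀ : E r₀ = lam * Fint f (u r₀) := by
        rw [hE_def]
        simp [hzero, phi_zero, Real.zero_rpow hqne]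
      have h1 : E r₀ < 0 := by
        rw [hEr₀]
        exact mul_neg_of_pos_of_neg hlam (hFneg _ ⟨hc0, hcγ⟩)
      have h2 : E 1 ≤ E r₀ := hE ⟨hr₀0.le, hr₀1.le⟩ ⟨zero_le_one, le_rfl⟩ hr₀1.le
      linarith
    · -- the integrated equation gives a contradiction
      have hfu2 : ∀ s ∈ Ioo (0:ℝ) r₀, 0 < f (u s) := by
        intro s hs
        have hle : u r₀ ≤ u s :=
          (huanti ⟨hs.1.le, hs.2.le⟩ ⟨hr₀0.le, le_rfl⟩ hs.2).le
        exact hfpos _ (lt_of_lt_of_le hcγ hle)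
      have hψanti := lt_self_of_deriv_neg (h := fun s => s^(n-1) * phi p (du u s))
        (h' := fun s => -(lam * f (u s)) * s^(n-1)) (a := 0) (b := r₀) hr₀0
        ((continuousOn_pow _).mul ((continuous_phi hp).comp_continuousOn
          (ucont'.mono (Icc_subset_Icc le_rfl hr₀1.le))))
        (fun s hs => psi_deriv hn uhQ ⟨hs.1, hs.2.trans hr₀1⟩)
        (by
          intro s hs
          have h4 : (0:ℝ) < s^(n-1) := pow_pos hs.1 _
          have h5 := hfu2 s hs
          show -(lam * f (u s)) * s^(n-1) < 0
          nlinarith [mul_pos (mul_pos hlam h5) h4])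
      simp only [hzero, phi_zero, mul_zero, hu.bc0] at hψanti
      exact lt_irrefl 0 hψanti
  -- assemble
  have huantiton : AntitoneOn u (Icc 0 1) := by
    apply antitoneOn_of_deriv_nonpos (convex_Icc _ _) ucont
    · intro x hx
      rw [interior_Icc] at hx
      exact (uhd x hx).differentiableAt.differentiableWithinAt
    · intro x hx
      rw [interior_Icc] at hx
      rw [(uhd x hx).deriv]
      exact (hneg x hx).le
  have hmem : ∀ r ∈ Icc (0:ℝ) 1, u r ∈ Icc 0 (u 0) := by
    intro r hr
    exact ⟨upos r hr, huantiton ⟨le_rfl, zero_le_one⟩ hr hr.1⟩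
  exact ⟨⟨ucont, ucont', uhd, rfl, hu.bc0, hmem, hneg, uhQ⟩, hfd⟩

/-! ### Part F : local uniqueness at the origin -/

lemma continuous_abs_rpow {q : ℝ} (hq : 1 < q) : Continuous fun t : ℝ => |t| ^ q := by
  rw [continuous_iff_continuousAt]
  exact fun y => (hasDerivAt_abs_rpow' hq y).continuousAt

lemma bound_by_pow {G G' : ℝ → ℝ} {R c : ℝ} {n : ℕ} (hnn : 1 ≤ n) (hR0 : 0 < R)
    (hcont : ContinuousOn G (Icc 0 R))
    (hder : ∀ r ∈ Ioo (0:ℝ) R, HasDerivAt G (G' r) r)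
    (hb : ∀ r ∈ Ioo (0:ℝ) R, |G' r| ≤ c * r^(n-1))
    (hG0 : G 0 = 0) :
    ∀ r ∈ Icc (0:ℝ) R, |G r| ≤ (c/n) * r^n := by
  have hn0 : ((n:ℝ)) ≠ 0 := by positivity
  have heqc : ∀ r : ℝ, (c/n)*((n:ℝ)*r^(n-1)) = c * r^(n-1) := by
    intro r
    field_simp
  have h1 := le_self_of_deriv_nonpos (h := fun r => G r - (c/n)*r^n)
    (h' := fun r => G' r - (c/n)*((n:ℝ)*r^(n-1))) (a := 0) (b := R)
    (hcont.sub (continuousOn_const.mul (continuousOn_pow _)))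
    (fun r hr => (hder r hr).sub ((hasDerivAt_pow n r).const_mul _))
    (by
      intro r hr
      show G' r - (c/n)*((n:ℝ)*r^(n-1)) ≤ 0
      have hb' := (abs_le.mp (hb r hr)).2
      rw [heqc r]
      linarith)
  have h2 := le_self_of_deriv_nonpos (h := fun r => -(G r) - (c/n)*r^n)
    (h' := fun r => -(G' r) - (c/n)*((n:ℝ)*r^(n-1))) (a := 0) (b := R)
    ((hcont.neg).sub (continuousOn_const.mul (continuousOn_pow _)))
    (fun r hr => ((hder r hr).neg).sub ((hasDerivAt_pow n r).const_mul _))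
    (by
      intro r hr
      show -(G' r) - (c/n)*((n:ℝ)*r^(n-1)) ≤ 0
      have hb' := (abs_le.mp (hb r hr)).1
      rw [heqc r]
      linarith)
  intro r hr
  have e0 : (0:ℝ)^n = 0 := zero_pow (by omega)
  have h1' := h1 r hr
  have h2' := h2 r hr
  simp only [hG0, e0, mul_zero, sub_zero, neg_zero, zero_sub, zero_add] at h1' h2'
  rw [abs_le]
  constructor <;> linarith

lemma fu_lower {p lam d : ℝ} {n : ℕ} {f u u' : ℝ → ℝ}
    (hfC : ContinuousOn f (Ici 0)) (hd : 0 < d)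
    (S : Sol p n lam f d u u') {m : ℝ} (hm : m < f d) :
    ∃ δ > 0, ∀ s ∈ Icc (0:ℝ) 1, dist s 0 < δ → m < f (u s) := by
  have hcfu : ContinuousWithinAt (fun s => f (u s)) (Icc 0 1) 0 := by
    apply ContinuousAt.comp_continuousWithinAt
    · rw [S.init]
      exact hfC.continuousAt (Ici_mem_nhds hd)
    · exact S.cont 0 ⟨le_rfl, zero_le_one⟩
  have hev : ∀ᶠ s in 𝓝[Icc (0:ℝ) 1] 0, m < f (u s) :=
    Filter.Tendsto.eventually hcfu (eventually_gt_nhds (by show m < f (u 0); rw [S.init]; exact hm))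
  obtain ⟨δ, hδ0, hδ'⟩ := Metric.mem_nhdsWithin_iff.mp hev
  exact ⟨δ, hδ0, fun s hs1 hs2 => hδ' ⟨Metric.mem_ball.mpr hs2, hs1⟩⟩

set_option maxHeartbeats 1600000 in
lemma sol_local {p lam d : ℝ} {n : ℕ} {f u u' w w' : ℝ → ℝ}
    (hp : 1 < p) (hn : 1 ≤ n) (hlam : 0 < lam)
    (hf : ContDiffOn ℝ 1 f (Ici 0)) (hd : 0 < d) (hfd : 0 < f d)
    (S1 : Sol p n lam f d u u') (S2 : Sol p n lam f d w w') :
    ∃ R, 0 < R ∧ R ≤ 1/2 ∧ EqOn u w (Icc 0 R) := by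
  have hp1 : (0:ℝ) < p - 1 := by linarith
  set q : ℝ := p/(p-1) with hq_def
  have hq : 1 < q := by rw [hq_def, lt_div_iff₀ hp1]; linarith
  have hq0 : (0:ℝ) < q := by linarith
  have hn0 : (0:ℝ) < (n:ℝ) := by exact_mod_cast Nat.lt_of_lt_of_le Nat.zero_lt_one hn
  -- Lipschitz constant for f on [0,d]
  have hfIcc : ContDiffOn ℝ 1 f (Icc 0 d) := hf.mono Icc_subset_Ici_self
  obtain ⟨L, hLbound⟩ := isCompact_Icc.exists_bound_of_continuousOn
    (hfIcc.continuousOn_derivWithin (uniqueDiffOn_Icc hd) le_rfl)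
  have hL0 : 0 ≤ L := le_trans (norm_nonneg _) (hLbound 0 ⟨le_rfl, hd.le⟩)
  have hLip : ∀ a ∈ Icc (0:ℝ) d, ∀ b ∈ Icc (0:ℝ) d, |f a - f b| ≤ L * |a - b| := by
    intro a ha b hb
    have := Convex.norm_image_sub_le_of_norm_derivWithin_le (hfIcc.differentiableOn one_ne_zero)
      hLbound (convex_Icc _ _) hb ha
    simpa [Real.norm_eq_abs] using this
  -- bounds for f on [0,d]
  obtain ⟨M, hM⟩ := isCompact_Icc.exists_bound_of_continuousOn
    (hf.continuousOn.mono (Icc_subset_Ici_self : Icc (0:ℝ) d ⊆ Ici 0))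
  have hMf : ∀ x ∈ Icc (0:ℝ) d, f x ≤ M := fun x hx =>
    (le_abs_self _).trans (by simpa [Real.norm_eq_abs] using hM x hx)
  have hM0 : 0 < M := lt_of_lt_of_le hfd (hMf d ⟨hd.le, le_rfl⟩)
  set m : ℝ := f d / 2 with hm_def
  have hm0 : 0 < m := by rw [hm_def]; linarith
  -- radii where f∘u, f∘w ≥ m
  obtain ⟨δu, hδu0, hδu⟩ := fu_lower hf.continuousOn hd S1 (m := m) (by rw [hm_def]; linarith)
  obtain ⟨δw, hδw0, hδw⟩ := fu_lower hf.continuousOn hd S2 (m := m) (by rw [hm_def]; linarith)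
  -- contraction constants
  set C5 : ℝ := (q-1) * ((lam*m/n)^(q-2) + (lam*M/n)^(q-2)) with hC5_def
  have hC50 : 0 ≤ C5 := by
    apply mul_nonneg (by linarith)
    have h1 : (0:ℝ) ≤ (lam*m/n)^(q-2) := Real.rpow_nonneg (by positivity) _
    have h2 : (0:ℝ) ≤ (lam*M/n)^(q-2) := Real.rpow_nonneg (by positivity) _
    linarith
  set C6 : ℝ := C5 * (lam * L / n) with hC6_def
  have hC60 : 0 ≤ C6 := mul_nonneg hC50 (by positivity)
  set Rc : ℝ := (q/(2*(C6+1))) ^ (1/q) with hRc_def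
  have hRc0 : 0 < Rc := Real.rpow_pos_of_pos (by positivity) _
  have hRcq : Rc ^ q = q/(2*(C6+1)) := by
    rw [hRc_def, ← Real.rpow_mul (by positivity), one_div_mul_cancel (ne_of_gt hq0),
      Real.rpow_one]
  set R : ℝ := min (min (δu/2) (δw/2)) (min Rc (1/2)) with hR_def
  have hR0 : 0 < R := lt_min (lt_min (by linarith) (by linarith)) (lt_min hRc0 one_half_pos)
  have hRhalf : R ≤ 1/2 := (min_le_right _ _).trans (min_le_right _ _)
  have hR1 : R ≤ 1 := hRhalf.trans (by norm_num)
  have hRRc : R ≤ Rc := (min_le_right _ _).trans (min_le_left _ _)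
  -- bounds for f∘u, f∘w on [0,R]
  have hmu : ∀ s ∈ Icc (0:ℝ) R, m ≤ f (u s) := by
    intro s hs
    apply (hδu s ⟨hs.1, hs.2.trans hR1⟩ _).le
    rw [Real.dist_eq, sub_zero, abs_of_nonneg hs.1]
    have h1 : R ≤ δu/2 := (min_le_left _ _).trans (min_le_left _ _)
    linarith [hs.2]
  have hmw : ∀ s ∈ Icc (0:ℝ) R, m ≤ f (w s) := by
    intro s hs
    apply (hδw s ⟨hs.1, hs.2.trans hR1⟩ _).le
    rw [Real.dist_eq, sub_zero, abs_of_nonneg hs.1]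
    have h1 : R ≤ δw/2 := (min_le_left _ _).trans (min_le_right _ _)
    linarith [hs.2]
  have hMu : ∀ s ∈ Icc (0:ℝ) R, f (u s) ≤ M :=
    fun s hs => hMf _ (S1.mem s ⟨hs.1, hs.2.trans hR1⟩)
  have hMw : ∀ s ∈ Icc (0:ℝ) R, f (w s) ≤ M :=
    fun s hs => hMf _ (S2.mem s ⟨hs.1, hs.2.trans hR1⟩)
  -- psi bounds
  have hψu1 := psi_le hp hn hlam S1.cont' S1.init' S1.hQ hR0 hR1 hmu
  have hψu2 := psi_ge hp hn hlam S1.cont' S1.init' S1.hQ hR0 hR1 hMu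
  have hψw1 := psi_le hp hn hlam S2.cont' S2.init' S2.hQ hR0 hR1 hmw
  have hψw2 := psi_ge hp hn hlam S2.cont' S2.init' S2.hQ hR0 hR1 hMw
  -- max of |u - w| on [0,R]
  have hcontu : ContinuousOn u (Icc 0 R) := S1.cont.mono (Icc_subset_Icc le_rfl hR1)
  have hcontw : ContinuousOn w (Icc 0 R) := S2.cont.mono (Icc_subset_Icc le_rfl hR1)
  obtain ⟨rstar, hrstar, hmax⟩ := isCompact_Icc.exists_isMaxOn
    ⟨0, left_mem_Icc.2 hR0.le⟩ ((hcontu.sub hcontw).abs)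
  set N : ℝ := |u rstar - w rstar| with hN_def
  have hN0 : 0 ≤ N := abs_nonneg _
  have hNb : ∀ s ∈ Icc (0:ℝ) R, |u s - w s| ≤ N := fun s hs => hmax hs
  -- bound for the difference of the psi's
  have hψdiff : ∀ r ∈ Icc (0:ℝ) R,
      |(r^(n-1) * phi p (u' r) - r^(n-1) * phi p (w' r))| ≤ (lam*L*N/n) * r^n := by
    apply bound_by_pow hn hR0
    · apply ContinuousOn.sub
      · exact (continuousOn_pow _).mul ((continuous_phi hp).comp_continuousOn
          (S1.cont'.mono (Icc_subset_Icc le_rfl hR1)))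
      · exact (continuousOn_pow _).mul ((continuous_phi hp).comp_continuousOn
          (S2.cont'.mono (Icc_subset_Icc le_rfl hR1)))
    · exact fun r hr => (psi_deriv hn S1.hQ (Ioo_subset_Ioo le_rfl hR1 hr)).sub
        (psi_deriv hn S2.hQ (Ioo_subset_Ioo le_rfl hR1 hr))
    · intro r hr
      have h3 : (0:ℝ) ≤ r^(n-1) := pow_nonneg hr.1.le _
      have h1 := hLip (u r) (S1.mem r ⟨hr.1.le, hr.2.le.trans hR1⟩)
        (w r) (S2.mem r ⟨hr.1.le, hr.2.le.trans hR1⟩)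
      have h2 : |u r - w r| ≤ N := hNb r ⟨hr.1.le, hr.2.le⟩
      have heq : -(lam * f (u r)) * r^(n-1) - -(lam * f (w r)) * r^(n-1)
          = lam * (f (w r) - f (u r)) * r^(n-1) := by ring
      rw [heq, abs_mul, abs_mul, abs_of_nonneg hlam.le, abs_of_nonneg h3]
      have h5 : |f (w r) - f (u r)| ≤ L * N := by
        rw [abs_sub_comm]
        exact h1.trans (mul_le_mul_of_nonneg_left h2 hL0)
      have h6 := mul_le_mul_of_nonneg_right
        (mul_le_mul_of_nonneg_left h5 hlam.le) h3
      calc lam * |f (w r) - f (u r)| * r ^ (n - 1) ≤ lam * (L*N) * r^(n-1) := h6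
        _ = lam * L * N * r^(n-1) := by ring
    · simp [S1.init', S2.init', phi_zero]
  -- pointwise bounds for the Q's
  have hQrange : ∀ (v' : ℝ → ℝ),
      (∀ r ∈ Icc (0:ℝ) R, r^(n-1) * phi p (v' r) ≤ -(lam * m / n) * r^n) →
      (∀ r ∈ Icc (0:ℝ) R, -(lam * M / n) * r^n ≤ r^(n-1) * phi p (v' r)) →
      ∀ r ∈ Ioc (0:ℝ) R, phi p (v' r) ∈ Icc (-((lam*M/n)*r)) (-((lam*m/n)*r)) := by
    intro v' hle hge r hr
    have h4 : (0:ℝ) < r^(n-1) := pow_pos hr.1 _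
    have h5 : r^n = r^(n-1) * r := by
      rw [← pow_succ]
      congr 1
      omega
    constructor
    · have h6 := hge r ⟨hr.1.le, hr.2⟩
      rw [h5] at h6
      have h7 : r^(n-1) * (-((lam*M/n)*r)) ≤ r^(n-1) * phi p (v' r) := by
        rw [show r^(n-1) * (-((lam*M/n)*r)) = -(lam*M/n)*(r^(n-1)*r) from by ring]
        exact h6
      exact le_of_mul_le_mul_left h7 h4
    · have h6 := hle r ⟨hr.1.le, hr.2⟩
      rw [h5] at h6
      have h7 : r^(n-1) * phi p (v' r) ≤ r^(n-1) * (-((lam*m/n)*r)) := by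
        rw [show r^(n-1) * (-((lam*m/n)*r)) = -(lam*m/n)*(r^(n-1)*r) from by ring]
        exact h6
      exact le_of_mul_le_mul_left h7 h4
  have hQu := hQrange u' hψu1 hψu2
  have hQw := hQrange w' hψw1 hψw2
  -- difference of the Q's
  have hΔQ : ∀ r ∈ Ioc (0:ℝ) R, |phi p (u' r) - phi p (w' r)| ≤ (lam*L*N/n) * r := by
    intro r hr
    have h4 : (0:ℝ) < r^(n-1) := pow_pos hr.1 _
    have h5 : r^n = r^(n-1) * r := by
      rw [← pow_succ]
      congr 1
      omega
    have h6 := hψdiff r ⟨hr.1.le, hr.2⟩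
    rw [h5] at h6
    have heq : r^(n-1) * phi p (u' r) - r^(n-1) * phi p (w' r)
        = r^(n-1) * (phi p (u' r) - phi p (w' r)) := by ring
    rw [heq, abs_mul, abs_of_pos h4] at h6
    have h7 : r^(n-1) * |phi p (u' r) - phi p (w' r)|
        ≤ r^(n-1) * ((lam*L*N/n) * r) := by
      rw [show r^(n-1) * ((lam*L*N/n) * r) = (lam*L*N/n)*(r^(n-1)*r) from by ring]
      exact h6
    exact le_of_mul_le_mul_left h7 h4
  -- difference of the derivatives
  have hΔu' : ∀ r ∈ Ioo (0:ℝ) R, |u' r - w' r| ≤ C6 * N * r^(q-1) := by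
    intro r hr
    have hrR : r ∈ Ioc (0:ℝ) R := ⟨hr.1, hr.2.le⟩
    have hA0 : (0:ℝ) < (lam*m/n)*r := mul_pos (div_pos (mul_pos hlam hm0) hn0) hr.1
    have hu'eq : u' r = phi q (phi p (u' r)) := by
      rw [hq_def]
      exact (phi_comp hp _).symm
    have hw'eq : w' r = phi q (phi p (w' r)) := by
      rw [hq_def]
      exact (phi_comp hp _).symm
    have hsub := phi_sub_le hq hA0 (hQu r hrR) (hQw r hrR)
    have hrr : r ^ (q-2) * r = r ^ (q-1) := by
      rw [← Real.rpow_add_one hr.1.ne']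
      congr 1
      ring
    have hexp1 : ((lam*m/n)*r) ^ (q-2) = (lam*m/n)^(q-2) * r^(q-2) :=
      Real.mul_rpow (by positivity) hr.1.le
    have hexp2 : ((lam*M/n)*r) ^ (q-2) = (lam*M/n)^(q-2) * r^(q-2) :=
      Real.mul_rpow (by positivity) hr.1.le
    have hCr : (0:ℝ) ≤ C5 * r^(q-2) := mul_nonneg hC50 (Real.rpow_nonneg hr.1.le _)
    calc |u' r - w' r| = |phi q (phi p (u' r)) - phi q (phi p (w' r))| := by
          rw [← hu'eq, ← hw'eq]
      _ ≤ (q-1) * (((lam*m/n)*r)^(q-2) + ((lam*M/n)*r)^(q-2))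
          * |phi p (u' r) - phi p (w' r)| := hsub
      _ = C5 * r^(q-2) * |phi p (u' r) - phi p (w' r)| := by
          rw [hexp1, hexp2, hC5_def]
          ring
      _ ≤ C5 * r^(q-2) * ((lam*L*N/n) * r) :=
          mul_le_mul_of_nonneg_left (hΔQ r hrR) hCr
      _ = C6 * N * (r^(q-2) * r) := by rw [hC6_def]; ring
      _ = C6 * N * r^(q-1) := by rw [hrr]
  -- integrate the bound
  have habsq : Continuous fun t : ℝ => |t| ^ q := continuous_abs_rpow hq
  have hqne : q ≠ 0 := ne_of_gt hq0
  have key : ∀ r ∈ Icc (0:ℝ) R, |u r - w r| ≤ (C6*N/q) * |r|^q := by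
    have hphir : ∀ r ∈ Ioo (0:ℝ) R, (C6*N/q) * (q * phi q r) = C6 * N * r^(q-1) := by
      intro r hr
      have : phi q r = r^(q-1) := by
        rw [phi, abs_of_pos hr.1, show q - 1 = (q-2) + 1 by ring,
          Real.rpow_add_one hr.1.ne']
        ring
      rw [this]
      field_simp
    have h1 := le_self_of_deriv_nonpos (h := fun r => (u r - w r) - (C6*N/q) * |r|^q)
      (h' := fun r => (u' r - w' r) - (C6*N/q) * (q * phi q r)) (a := 0) (b := R)
      (((hcontu.sub hcontw)).sub (continuousOn_const.mul habsq.continuousOn))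
      (fun r hr => (((S1.hd r (Ioo_subset_Ioo le_rfl hR1 hr)).sub
        (S2.hd r (Ioo_subset_Ioo le_rfl hR1 hr))).sub
        ((hasDerivAt_abs_rpow' hq r).const_mul _)))
      (by
        intro r hr
        show (u' r - w' r) - (C6*N/q) * (q * phi q r) ≤ 0
        rw [hphir r hr]
        have := (abs_le.mp (hΔu' r hr)).2
        linarith)
    have h2 := le_self_of_deriv_nonpos (h := fun r => (w r - u r) - (C6*N/q) * |r|^q)
      (h' := fun r => (w' r - u' r) - (C6*N/q) * (q * phi q r)) (a := 0) (b := R)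
      (((hcontw.sub hcontu)).sub (continuousOn_const.mul habsq.continuousOn))
      (fun r hr => (((S2.hd r (Ioo_subset_Ioo le_rfl hR1 hr)).sub
        (S1.hd r (Ioo_subset_Ioo le_rfl hR1 hr))).sub
        ((hasDerivAt_abs_rpow' hq r).const_mul _)))
      (by
        intro r hr
        show (w' r - u' r) - (C6*N/q) * (q * phi q r) ≤ 0
        rw [hphir r hr]
        have := (abs_le.mp (hΔu' r hr)).1
        linarith)
    intro r hr
    have h1' := h1 r hr
    have h2' := h2 r hr
    simp only [S1.init, S2.init, sub_self, abs_zero, Real.zero_rpow hqne,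
      mul_zero, zero_sub, sub_zero, zero_mul] at h1' h2'
    rw [abs_le]
    constructor <;> linarith
  -- contraction
  have hfrac : C6 * Rc^q / q ≤ 1/2 := by
    rw [hRcq]
    have h2 : C6 * (q / (2*(C6+1))) / q = C6 / (2*(C6+1)) := by
      field_simp
    rw [h2, div_le_div_iff₀ (by positivity) (by norm_num : (0:ℝ) < 2)]
    linarith
  have hNN : N ≤ N * (1/2) := by
    have h1 := key rstar hrstar
    have h2 : |rstar|^q ≤ Rc^q := by
      apply Real.rpow_le_rpow (abs_nonneg _) _ hq0.le
      rw [abs_of_nonneg hrstar.1]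
      exact hrstar.2.trans hRRc
    have h3 : (C6*N/q) * |rstar|^q ≤ (C6*N/q) * Rc^q :=
      mul_le_mul_of_nonneg_left h2 (by positivity)
    have h4 : (C6*N/q) * Rc^q = N * (C6 * Rc^q / q) := by ring
    have h5 : N * (C6 * Rc^q / q) ≤ N * (1/2) :=
      mul_le_mul_of_nonneg_left hfrac hN0
    calc N = |u rstar - w rstar| := hN_def
      _ ≤ (C6*N/q) * |rstar|^q := h1
      _ ≤ (C6*N/q) * Rc^q := h3
      _ = N * (C6 * Rc^q / q) := h4
      _ ≤ N * (1/2) := h5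
  have hNzero : N = 0 := by linarith
  refine ⟨R, hR0, hRhalf, ?_⟩
  intro s hs
  have := hNb s hs
  rw [hNzero] at this
  have habs0 : |u s - w s| = 0 := le_antisymm this (abs_nonneg _)
  have := abs_eq_zero.mp habs0
  linarith [sub_eq_zero.mp this]

/-! ### Part G : propagation of equality -/

set_option maxHeartbeats 1600000 in
lemma sol_extend {p lam d : ℝ} {n : ℕ} {f u u' w w' : ℝ → ℝ}
    (hp : 1 < p) (hn : 1 ≤ n) (hlam : 0 < lam)
    (hf : ContDiffOn ℝ 1 f (Ici 0)) (hd : 0 < d)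
    (S1 : Sol p n lam f d u u') (S2 : Sol p n lam f d w w')
    {R : ℝ} (hR0 : 0 < R) (hRhalf : R ≤ 1/2) (hloc : EqOn u w (Icc 0 R))
    {T : ℝ} (hRT : R ≤ T) (hT1 : T < 1) :
    EqOn u w (Icc 0 T) := by
  have hp1 : (0:ℝ) < p - 1 := by linarith
  set q : ℝ := p/(p-1) with hq_def
  have hq : 1 < q := by rw [hq_def, lt_div_iff₀ hp1]; linarith
  have hR1 : R < 1 := by linarith
  have hsub1 : Icc R T ⊆ Icc (0:ℝ) 1 := Icc_subset_Icc hR0.le hT1.le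
  have hsubo : Icc R T ⊆ Ioo (0:ℝ) 1 :=
    fun x hx => ⟨lt_of_lt_of_le hR0 hx.1, lt_of_le_of_lt hx.2 hT1⟩
  -- Lipschitz for f on [0,d]
  have hfIcc : ContDiffOn ℝ 1 f (Icc 0 d) := hf.mono Icc_subset_Ici_self
  obtain ⟨L, hLbound⟩ := isCompact_Icc.exists_bound_of_continuousOn
    (hfIcc.continuousOn_derivWithin (uniqueDiffOn_Icc hd) le_rfl)
  have hL0 : 0 ≤ L := le_trans (norm_nonneg _) (hLbound 0 ⟨le_rfl, hd.le⟩)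
  have hLip : ∀ a ∈ Icc (0:ℝ) d, ∀ b ∈ Icc (0:ℝ) d, |f a - f b| ≤ L * |a - b| := by
    intro a ha b hb
    have := Convex.norm_image_sub_le_of_norm_derivWithin_le (hfIcc.differentiableOn one_ne_zero)
      hLbound (convex_Icc _ _) hb ha
    simpa [Real.norm_eq_abs] using this
  -- bounds on u', w' on [R,T]
  obtain ⟨z1, hz1, hz1max⟩ := isCompact_Icc.exists_isMaxOn ⟨R, left_mem_Icc.2 hRT⟩
    (S1.cont'.mono hsub1)
  obtain ⟨z2, hz2, hz2max⟩ := isCompact_Icc.exists_isMaxOn ⟨R, left_mem_Icc.2 hRT⟩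
    (S2.cont'.mono hsub1)
  set δ : ℝ := min (-(u' z1)) (-(w' z2)) with hδ_def
  have hδ0 : 0 < δ := lt_min (neg_pos.2 (S1.neg z1 (hsubo hz1)))
    (neg_pos.2 (S2.neg z2 (hsubo hz2)))
  have hu'le : ∀ s ∈ Icc R T, u' s ≤ -δ := by
    intro s hs
    have h1 := hz1max hs
    have h2 : δ ≤ -(u' z1) := min_le_left _ _
    simp only [Set.mem_setOf_eq] at h1
    linarith [h1]
  have hw'le : ∀ s ∈ Icc R T, w' s ≤ -δ := by
    intro s hs
    have h1 := hz2max hs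
    have h2 : δ ≤ -(w' z2) := min_le_right _ _
    simp only [Set.mem_setOf_eq] at h1
    linarith [h1]
  obtain ⟨B1, hB1⟩ := isCompact_Icc.exists_bound_of_continuousOn (S1.cont'.mono hsub1)
  obtain ⟨B2, hB2⟩ := isCompact_Icc.exists_bound_of_continuousOn (S2.cont'.mono hsub1)
  set B : ℝ := max B1 B2 with hB_def
  have hu'ge : ∀ s ∈ Icc R T, -B ≤ u' s := by
    intro s hs
    have h1 := hB1 s hs
    rw [Real.norm_eq_abs] at h1
    have h2 := (abs_le.mp h1).1
    have h3 : B1 ≤ B := le_max_left _ _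
    linarith
  have hw'ge : ∀ s ∈ Icc R T, -B ≤ w' s := by
    intro s hs
    have h1 := hB2 s hs
    rw [Real.norm_eq_abs] at h1
    have h2 := (abs_le.mp h1).1
    have h3 : B2 ≤ B := le_max_right _ _
    linarith
  have hδB : δ ≤ B := by
    have h1 := hu'le R (left_mem_Icc.2 hRT)
    have h2 := hu'ge R (left_mem_Icc.2 hRT)
    linarith
  have hB0 : 0 < B := lt_of_lt_of_le hδ0 hδB
  -- ranges for the Q's
  have hQrange : ∀ (v' : ℝ → ℝ), (∀ s ∈ Icc R T, v' s ≤ -δ) → (∀ s ∈ Icc R T, -B ≤ v' s) →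
      ∀ s ∈ Icc R T, phi p (v' s) ∈ Icc (-(B^(p-1))) (-(δ^(p-1))) := by
    intro v' h1 h2 s hs
    have hv0 : v' s < 0 := lt_of_le_of_lt (h1 s hs) (by linarith)
    have habs1 : δ ≤ |v' s| := by
      rw [abs_of_neg hv0]
      linarith [h1 s hs]
    have habs2 : |v' s| ≤ B := by
      rw [abs_of_neg hv0]
      linarith [h2 s hs]
    rw [phi_eq_neg hp hv0]
    constructor
    · have := Real.rpow_le_rpow (abs_nonneg _) habs2 (by linarith : (0:ℝ) ≤ p - 1)
      linarith
    · have := Real.rpow_le_rpow hδ0.le habs1 (by linarith : (0:ℝ) ≤ p - 1)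
      linarith
  have hQu := hQrange u' hu'le hu'ge
  have hQw := hQrange w' hw'le hw'ge
  have hδp0 : 0 < δ^(p-1) := Real.rpow_pos_of_pos hδ0 _
  -- constants
  set Lφ : ℝ := (q-1) * ((δ^(p-1))^(q-2) + (B^(p-1))^(q-2)) with hLφ_def
  have hLφ0 : 0 ≤ Lφ := mul_nonneg (by linarith)
    (add_nonneg (Real.rpow_nonneg hδp0.le _) (Real.rpow_nonneg (by positivity) _))
  set K : ℝ := max Lφ (((n:ℝ)-1)/R + lam*L) with hK_def
  have hK0 : 0 ≤ K := le_trans hLφ0 (le_max_left _ _)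
  set η : ℝ := 1/(2*(K+1)) with hη_def
  have hη0 : 0 < η := by positivity
  -- the difference function
  set g : ℝ → ℝ × ℝ := fun τ => (u τ - w τ, phi p (u' τ) - phi p (w' τ)) with hg_def
  have hgcont : ContinuousOn g (Icc 0 1) := by
    apply ContinuousOn.prodMk
    · exact S1.cont.sub S2.cont
    · exact ((continuous_phi hp).comp_continuousOn S1.cont').sub
        ((continuous_phi hp).comp_continuousOn S2.cont')
  -- u' = w' at R
  have hu'w'R : u' R = w' R := by
    have hEq' : EqOn u' w' (Ioo 0 R) := by
      intro σ hσ
      have hmem : Icc (0:ℝ) R ∈ 𝓝 σ := Icc_mem_nhds hσ.1 hσ.2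
      have heq : u =ᶠ[𝓝 σ] w := Filter.eventuallyEq_of_mem hmem hloc
      have h1 : HasDerivAt w (u' σ) σ :=
        (Filter.EventuallyEq.hasDerivAt_iff heq).mp (S1.hd σ ⟨hσ.1, hσ.2.trans hR1⟩)
      exact h1.unique (S2.hd σ ⟨hσ.1, hσ.2.trans hR1⟩)
    apply eq_at_of_eqOn _ _ _ hEq'
    · exact (S1.cont'.continuousAt (Icc_mem_nhds hR0 hR1)).continuousWithinAt
    · exact (S2.cont'.continuousAt (Icc_mem_nhds hR0 hR1)).continuousWithinAt
    · apply mem_closure_iff_nhdsWithin_neBot.mp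
      rw [closure_Ioo (ne_of_lt hR0)]
      exact ⟨hR0.le, le_rfl⟩
  have hgR : g R = 0 := by
    rw [hg_def]
    simp [hloc (right_mem_Icc.2 hR0.le), hu'w'R, Prod.ext_iff]
  -- continuous induction
  set A : Set ℝ := {t | t ∈ Icc R T ∧ ∀ τ ∈ Icc R t, g τ = 0} with hA_def
  have hRA : R ∈ A := by
    refine ⟨left_mem_Icc.2 hRT, ?_⟩
    intro τ hτ
    have : τ = R := le_antisymm hτ.2 hτ.1
    rw [this]
    exact hgR
  have hAne : A.Nonempty := ⟨R, hRA⟩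
  have hAbdd : BddAbove A := ⟨T, fun t ht => ht.1.2⟩
  set t0 : ℝ := sSup A with ht0_def
  have ht0mem : t0 ∈ Icc R T := ⟨le_csSup hAbdd hRA, csSup_le hAne (fun t ht => ht.1.2)⟩
  have hgIco : ∀ τ ∈ Ico R t0, g τ = 0 := by
    intro τ hτ
    obtain ⟨a, haA, hτa⟩ := exists_lt_of_lt_csSup hAne hτ.2
    exact haA.2 τ ⟨hτ.1, hτa.le⟩
  have hgt0 : g t0 = 0 := by
    rcases eq_or_lt_of_le ht0mem.1 with heq | hlt
    · rw [← heq]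
      exact hgR
    · have hNB : (𝓝[Ico R t0] t0).NeBot := by
        apply mem_closure_iff_nhdsWithin_neBot.mp
        rw [closure_Ico (ne_of_lt hlt)]
        exact ⟨hlt.le, le_rfl⟩
      have hsub2 : Ico R t0 ⊆ Icc (0:ℝ) 1 := fun x hx =>
        hsub1 ⟨hx.1, hx.2.le.trans ht0mem.2⟩
      have ht0Icc : t0 ∈ Icc (0:ℝ) 1 := hsub1 ht0mem
      have h1 : u t0 = w t0 := by
        apply eq_at_of_eqOn ((S1.cont t0 ht0Icc).mono hsub2)
          ((S2.cont t0 ht0Icc).mono hsub2) hNB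
        intro τ hτ
        have := congrArg Prod.fst (hgIco τ hτ)
        simpa [hg_def, sub_eq_zero] using this
      have h2 : phi p (u' t0) = phi p (w' t0) := by
        apply eq_at_of_eqOn
          ((((continuous_phi hp).comp_continuousOn S1.cont') t0 ht0Icc).mono hsub2)
          ((((continuous_phi hp).comp_continuousOn S2.cont') t0 ht0Icc).mono hsub2) hNB
        intro τ hτ
        have := congrArg Prod.snd (hgIco τ hτ)
        simpa [hg_def, sub_eq_zero] using this
      rw [hg_def]
      simp [h1, h2, Prod.ext_iff]
  have ht0A : t0 ∈ A := by
    refine ⟨ht0mem, ?_⟩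
    intro τ hτ
    rcases lt_or_eq_of_le hτ.2 with h | h
    · exact hgIco τ ⟨hτ.1, h⟩
    · rw [h]
      exact hgt0
  have ht0T : t0 = T := by
    by_contra hne
    have ht0lt : t0 < T := lt_of_le_of_ne ht0mem.2 hne
    set b : ℝ := min (t0 + η) T with hb_def
    have hbt0 : t0 < b := lt_min (by linarith) ht0lt
    have hbT : b ≤ T := min_le_right _ _
    have hsubb : Icc t0 b ⊆ Icc R T := Icc_subset_Icc ht0mem.1 hbT
    obtain ⟨σ0, hσ0, hσ0max⟩ := isCompact_Icc.exists_isMaxOn ⟨t0, left_mem_Icc.2 hbt0.le⟩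
      ((hgcont.mono (hsubb.trans hsub1)).norm)
    set N : ℝ := ‖g σ0‖ with hN_def
    have hN0 : 0 ≤ N := norm_nonneg _
    set g' : ℝ → ℝ × ℝ := fun τ => (u' τ - w' τ,
      (-(((n:ℝ)-1)/τ) * phi p (u' τ) - lam * f (u τ))
        - (-(((n:ℝ)-1)/τ) * phi p (w' τ) - lam * f (w τ))) with hg'_def
    have hgder : ∀ τ ∈ Icc t0 b, HasDerivWithinAt g (g' τ) (Icc t0 b) τ := by
      intro τ hτ
      have hτ1 : τ ∈ Ioo (0:ℝ) 1 := hsubo (hsubb hτ)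
      exact (((S1.hd τ hτ1).sub (S2.hd τ hτ1)).prodMk
        ((S1.hQ τ hτ1).sub (S2.hQ τ hτ1))).hasDerivWithinAt
    have hgbound : ∀ τ ∈ Ico t0 b, ‖g' τ‖ ≤ K * N := by
      intro τ hτ
      have hτRT : τ ∈ Icc R T := hsubb ⟨hτ.1, hτ.2.le⟩
      have hgτ : ‖g τ‖ ≤ N := hσ0max ⟨hτ.1, hτ.2.le⟩
      have hfst : |u τ - w τ| ≤ N := by
        have h1 : |(g τ).1| ≤ ‖g τ‖ := norm_fst_le (g τ)
        have h2 : (g τ).1 = u τ - w τ := rfl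
        rw [h2] at h1
        linarith
      have hsnd : |phi p (u' τ) - phi p (w' τ)| ≤ N := by
        have h1 : |(g τ).2| ≤ ‖g τ‖ := norm_snd_le (g τ)
        have h2 : (g τ).2 = phi p (u' τ) - phi p (w' τ) := rfl
        rw [h2] at h1
        linarith
      have hc1 : |u' τ - w' τ| ≤ Lφ * N := by
        have hu'eq : u' τ = phi q (phi p (u' τ)) := by
          rw [hq_def]
          exact (phi_comp hp _).symm
        have hw'eq : w' τ = phi q (phi p (w' τ)) := by
          rw [hq_def]
          exact (phi_comp hp _).symm
        have hsubφ := phi_sub_le hq hδp0 (hQu τ hτRT) (hQw τ hτRT)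
        calc |u' τ - w' τ|
            = |phi q (phi p (u' τ)) - phi q (phi p (w' τ))| := by rw [← hu'eq, ← hw'eq]
          _ ≤ Lφ * |phi p (u' τ) - phi p (w' τ)| := by rw [hLφ_def]; exact hsubφ
          _ ≤ Lφ * N := mul_le_mul_of_nonneg_left hsnd hLφ0
      have hk0 : (0:ℝ) ≤ (n:ℝ)-1 := by
        have h1 : (1:ℝ) ≤ (n:ℝ) := by exact_mod_cast hn
        linarith
      have hτR : R ≤ τ := hτRT.1
      have hc2 : |(-(((n:ℝ)-1)/τ) * phi p (u' τ) - lam * f (u τ))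
          - (-(((n:ℝ)-1)/τ) * phi p (w' τ) - lam * f (w τ))|
          ≤ (((n:ℝ)-1)/R + lam*L) * N := by
        have e1 : (-(((n:ℝ)-1)/τ) * phi p (u' τ) - lam * f (u τ))
            - (-(((n:ℝ)-1)/τ) * phi p (w' τ) - lam * f (w τ))
            = (-(((n:ℝ)-1)/τ)) * (phi p (u' τ) - phi p (w' τ))
              + (-(lam * (f (u τ) - f (w τ)))) := by ring
        rw [e1]
        have h4 : |(-(((n:ℝ)-1)/τ)) * (phi p (u' τ) - phi p (w' τ))|
            ≤ (((n:ℝ)-1)/R) * N := by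
          rw [abs_mul, abs_neg, abs_of_nonneg (div_nonneg hk0 (by linarith : (0:ℝ) ≤ τ))]
          have hdiv : ((n:ℝ)-1)/τ ≤ ((n:ℝ)-1)/R :=
            div_le_div_of_nonneg_left hk0 hR0 hτR
          exact mul_le_mul hdiv hsnd (abs_nonneg _) (div_nonneg hk0 hR0.le)
        have h5 : |(-(lam * (f (u τ) - f (w τ))))| ≤ lam * (L * N) := by
          rw [abs_neg, abs_mul, abs_of_nonneg hlam.le]
          apply mul_le_mul_of_nonneg_left _ hlam.le
          exact (hLip _ (S1.mem τ (hsub1 hτRT)) _ (S2.mem τ (hsub1 hτRT))).trans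
            (mul_le_mul_of_nonneg_left hfst hL0)
        refine le_trans (abs_add_le _ _) ?_
        calc |(-(((n:ℝ)-1)/τ)) * (phi p (u' τ) - phi p (w' τ))|
              + |(-(lam * (f (u τ) - f (w τ))))|
            ≤ (((n:ℝ)-1)/R) * N + lam * (L * N) := add_le_add h4 h5
          _ = (((n:ℝ)-1)/R + lam*L) * N := by ring
      rw [Prod.norm_def]
      apply max_le
      · rw [Real.norm_eq_abs]
        calc |(g' τ).1| = |u' τ - w' τ| := rfl
          _ ≤ Lφ * N := hc1
          _ ≤ K * N := mul_le_mul_of_nonneg_right (le_max_left _ _) hN0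
      · rw [Real.norm_eq_abs]
        calc |(g' τ).2| = |(-(((n:ℝ)-1)/τ) * phi p (u' τ) - lam * f (u τ))
              - (-(((n:ℝ)-1)/τ) * phi p (w' τ) - lam * f (w τ))| := rfl
          _ ≤ (((n:ℝ)-1)/R + lam*L) * N := hc2
          _ ≤ K * N := mul_le_mul_of_nonneg_right (le_max_right _ _) hN0
    have hseg := norm_image_sub_le_of_norm_deriv_le_segment' hgder hgbound
    have h6 := hseg σ0 hσ0
    rw [hgt0, sub_zero] at h6
    have h7 : σ0 - t0 ≤ η := by
      have h8 : σ0 ≤ b := hσ0.2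
      have h9 : b ≤ t0 + η := min_le_left _ _
      linarith
    have h8 : K * N * (σ0 - t0) ≤ K * N * η :=
      mul_le_mul_of_nonneg_left h7 (mul_nonneg hK0 hN0)
    have h9 : K * η ≤ 1/2 := by
      rw [hη_def]
      have h10 : K * (1/(2*(K+1))) = K/(2*(K+1)) := by ring
      rw [h10, div_le_div_iff₀ (by positivity) (by norm_num : (0:ℝ) < 2)]
      linarith
    have hNN : N ≤ N * (1/2) := by
      calc N = ‖g σ0‖ := hN_def
        _ ≤ K * N * (σ0 - t0) := h6
        _ ≤ K * N * η := h8
        _ = N * (K * η) := by ring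
        _ ≤ N * (1/2) := mul_le_mul_of_nonneg_left h9 hN0
    have hNzero : N = 0 := by linarith
    have hbA : b ∈ A := by
      refine ⟨⟨ht0mem.1.trans hbt0.le, hbT⟩, ?_⟩
      intro τ hτ
      rcases le_or_gt τ t0 with h | h
      · exact ht0A.2 τ ⟨hτ.1, h⟩
      · have hτb : τ ∈ Icc t0 b := ⟨h.le, hτ.2⟩
        have h11 := hseg τ hτb
        rw [hgt0, sub_zero, hNzero, mul_zero, zero_mul] at h11
        exact norm_le_zero_iff.mp h11
    have := le_csSup hAbdd hbA
    linarith
  -- conclusion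
  intro s hs
  rcases le_or_gt s R with h | h
  · exact hloc ⟨hs.1, h⟩
  · have hgs : g s = 0 := ht0A.2 s ⟨h.le, by rw [ht0T]; exact hs.2⟩
    have := congrArg Prod.fst hgs
    simpa [hg_def, sub_eq_zero] using this

/-! ### Part H : full uniqueness and scaling -/

lemma sol_unique {p lam d : ℝ} {n : ℕ} {f u u' w w' : ℝ → ℝ}
    (hp : 1 < p) (hn : 1 ≤ n) (hlam : 0 < lam)
    (hf : ContDiffOn ℝ 1 f (Ici 0)) (hd : 0 < d) (hfd : 0 < f d)
    (S1 : Sol p n lam f d u u') (S2 : Sol p n lam f d w w') :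
    EqOn u w (Icc 0 1) := by
  obtain ⟨R, hR0, hRhalf, hloc⟩ := sol_local hp hn hlam hf hd hfd S1 S2
  have hIco : EqOn u w (Ico 0 1) := by
    intro s hs
    rcases le_or_gt s R with h | h
    · exact hloc ⟨hs.1, h⟩
    · exact sol_extend hp hn hlam hf hd S1 S2 hR0 hRhalf hloc h.le hs.2 ⟨hs.1, le_rfl⟩
  intro s hs
  rcases lt_or_eq_of_le hs.2 with h | h
  · exact hIco ⟨hs.1, h⟩
  · rw [h]
    have hNB : (𝓝[Ico (0:ℝ) 1] 1).NeBot := by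
      apply mem_closure_iff_nhdsWithin_neBot.mp
      rw [closure_Ico (by norm_num : (0:ℝ) ≠ 1)]
      exact ⟨zero_le_one, le_rfl⟩
    exact eq_at_of_eqOn ((S1.cont 1 (right_mem_Icc.2 zero_le_one)).mono Ico_subset_Icc_self)
      ((S2.cont 1 (right_mem_Icc.2 zero_le_one)).mono Ico_subset_Icc_self) hNB hIco

lemma phi_const_mul {p : ℝ} (hp : 1 < p) {κ : ℝ} (hκ : 0 < κ) (t : ℝ) :
    phi p (κ * t) = κ ^ (p-1) * phi p t := by
  rw [phi, phi, abs_mul, abs_of_pos hκ, Real.mul_rpow hκ.le (abs_nonneg t),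
    show p - 1 = 1 + (p-2) by ring, Real.rpow_add hκ, Real.rpow_one]
  ring

lemma Sol.scale {p lam d : ℝ} {n : ℕ} {f u u' : ℝ → ℝ}
    (hp : 1 < p) {κ : ℝ} (hκ0 : 0 < κ) (hκ1 : κ ≤ 1)
    (S : Sol p n lam f d u u') :
    Sol p n (κ^p * lam) f d (fun r => u (κ*r)) (fun r => κ * u' (κ*r)) := by
  have hmap : ∀ r ∈ Icc (0:ℝ) 1, κ * r ∈ Icc (0:ℝ) 1 := by
    intro r hr
    constructor
    · exact mul_nonneg hκ0.le hr.1
    · calc κ * r ≤ 1 * 1 := mul_le_mul hκ1 hr.2 hr.1 zero_le_one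
        _ = 1 := one_mul 1
  have hmapo : ∀ r ∈ Ioo (0:ℝ) 1, κ * r ∈ Ioo (0:ℝ) 1 := by
    intro r hr
    constructor
    · exact mul_pos hκ0 hr.1
    · calc κ * r < κ * 1 := mul_lt_mul_of_pos_left hr.2 hκ0
        _ ≤ 1 := by linarith
  have hcm : ContinuousOn (fun r : ℝ => κ * r) (Icc 0 1) :=
    (continuous_const.mul continuous_id).continuousOn
  refine ⟨?_, ?_, ?_, ?_, ?_, ?_, ?_, ?_⟩
  · exact S.cont.comp hcm hmap
  · exact continuousOn_const.mul (S.cont'.comp hcm hmap)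
  · intro r hr
    have h1 := (S.hd (κ*r) (hmapo r hr)).comp r ((hasDerivAt_id r).const_mul κ)
    simpa [mul_comm, Function.comp_def] using h1
  · show u (κ * 0) = d
    rw [mul_zero, S.init]
  · show κ * u' (κ * 0) = 0
    rw [mul_zero, S.init', mul_zero]
  · intro r hr
    exact S.mem _ (hmap r hr)
  · intro r hr
    exact mul_neg_of_pos_of_neg hκ0 (S.neg _ (hmapo r hr))
  · intro r hr
    have hκr := hmapo r hr
    have hbase := S.hQ (κ*r) hκr
    have heq : (fun s => phi p (κ * u' (κ*s))) = fun s => κ^(p-1) * phi p (u' (κ*s)) := by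
      funext s
      exact phi_const_mul hp hκ0 _
    show HasDerivAt (fun s => phi p (κ * u' (κ*s)))
      (-(((n:ℝ)-1)/r) * phi p (κ * u' (κ*r)) - (κ^p*lam) * f (u (κ*r))) r
    rw [heq]
    have h2 : HasDerivAt (fun s => κ^(p-1) * phi p (u' (κ*s)))
        (κ^(p-1) * ((-(((n:ℝ)-1)/(κ*r)) * phi p (u' (κ*r)) - lam * f (u (κ*r))) * (κ*1))) r :=
      (hbase.comp r ((hasDerivAt_id r).const_mul κ)).const_mul _
    convert h2 using 1
    rw [phi_const_mul hp hκ0]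
    have hκp : κ^(p-1) * κ = κ^p := by
      rw [← Real.rpow_add_one (ne_of_gt hκ0)]
      congr 1
      ring
    have hr0 : r ≠ 0 := ne_of_gt hr.1
    rw [← hκp]
    field_simp

lemma key_le {p : ℝ} (hp : 1 < p) {n : ℕ} (hn : 1 ≤ n)
    {f : ℝ → ℝ} (hf : ContDiffOn ℝ 1 f (Ici 0))
    {γ : ℝ} (hfpos : ∀ v, γ < v → 0 < f v)
    (hFneg : ∀ c ∈ Ioc (0:ℝ) γ, Fint f c < 0)
    {lam₁ lam₂ : ℝ} (hlam₁ : 0 < lam₁) (hlam₂ : 0 < lam₂) (hle : lam₁ ≤ lam₂)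
    {u₁ u₂ : ℝ → ℝ}
    (hu₁ : RadialSol p n (fun _ v => lam₁ * f v) u₁)
    (hu₂ : RadialSol p n (fun _ v => lam₂ * f v) u₂)
    (hmax : u₁ 0 = u₂ 0) :
    lam₁ = lam₂ ∧ EqOn u₁ u₂ (Icc 0 1) := by
  obtain ⟨S₁, hfd₁⟩ := radial_to_sol hp hn hlam₁ hf.continuousOn hfpos hFneg hu₁
  obtain ⟨S₂', hfd₂⟩ := radial_to_sol hp hn hlam₂ hf.continuousOn hfpos hFneg hu₂
  have hd0 : 0 < u₁ 0 := hu₁.pos 0 ⟨le_rfl, one_pos⟩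
  have hS₂ : Sol p n lam₂ f (u₁ 0) u₂ (du u₂) := by
    rw [hmax]
    exact S₂'
  set κ : ℝ := (lam₁/lam₂) ^ (1/p) with hκ_def
  have hκ0 : 0 < κ := Real.rpow_pos_of_pos (div_pos hlam₁ hlam₂) _
  have hκ1 : κ ≤ 1 := Real.rpow_le_one (by positivity)
    (by rw [div_le_one hlam₂]; exact hle) (by positivity)
  have hκp : κ^p = lam₁/lam₂ := by
    rw [hκ_def, ← Real.rpow_mul (by positivity),
      one_div_mul_cancel (by linarith : p ≠ 0), Real.rpow_one]
  have hκpl : κ^p * lam₂ = lam₁ := by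
    rw [hκp]
    field_simp
  have V := Sol.scale hp hκ0 hκ1 hS₂
  rw [hκpl] at V
  have hEq := sol_unique hp hn hlam₁ hf hd0 hfd₁ S₁ V
  have h1 : u₂ κ = 0 := by
    have h2 := hEq (right_mem_Icc.2 zero_le_one)
    have h3 : u₁ 1 = u₂ (κ * 1) := h2
    rw [hu₁.bc1, mul_one] at h3
    exact h3.symm
  have hκeq : κ = 1 := by
    by_contra hne
    have hκlt : κ < 1 := lt_of_le_of_ne hκ1 hne
    have := hu₂.pos κ ⟨hκ0.le, hκlt⟩
    rw [h1] at this
    exact lt_irrefl 0 this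
  have hlameq : lam₁ = lam₂ := by
    have h4 := hκp
    rw [hκeq, Real.one_rpow] at h4
    field_simp at h4
    linarith
  refine ⟨hlameq, ?_⟩
  intro s hs
  have h5 : u₁ s = u₂ (κ * s) := hEq hs
  rw [hκeq, one_mul] at h5
  exact h5

theorem stmt7' (p : ℝ) (hp : 1 < p) (n : ℕ) (hn : 1 ≤ n)
    (f : ℝ → ℝ) (hf : ContDiffOn ℝ 1 f (Set.Ici 0))
    (hsign : (∀ v > (0:ℝ), 0 < f v) ∨
      ∃ γ > (0:ℝ), (∀ v ∈ Set.Ioo (0:ℝ) γ, f v < 0) ∧ (∀ v > γ, 0 < f v))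
    (lam₁ lam₂ : ℝ) (hlam₁ : 0 < lam₁) (hlam₂ : 0 < lam₂)
    (u₁ u₂ : ℝ → ℝ)
    (hu₁ : RadialSol p n (fun _ v => lam₁ * f v) u₁)
    (hu₂ : RadialSol p n (fun _ v => lam₂ * f v) u₂)
    (hmax : u₁ 0 = u₂ 0) :
    lam₁ = lam₂ ∧ Set.EqOn u₁ u₂ (Set.Icc 0 1) := by
  have hpack : ∃ γ : ℝ, (∀ v, γ < v → 0 < f v)
      ∧ (∀ c ∈ Ioc (0:ℝ) γ, Fint f c < 0) := by
    rcases hsign with h1 | ⟨γ, hγpos, hneg, hpos⟩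
    · exact ⟨0, fun v hv => h1 v hv, fun c hc => absurd hc.1 (not_lt.2 hc.2)⟩
    · exact ⟨γ, fun v hv => hpos v hv, fun c hc => Fint_neg hf.continuousOn hneg hc⟩
  obtain ⟨γ, hfpos, hFneg⟩ := hpack
  rcases le_total lam₁ lam₂ with hle | hle
  · exact key_le hp hn hf hfpos hFneg hlam₁ hlam₂ hle hu₁ hu₂ hmax
  · obtain ⟨heq, hEq⟩ := key_le hp hn hf hfpos hFneg hlam₂ hlam₁ hle hu₂ hu₁ hmax.symm
    exact ⟨heq.symm, fun s hs => (hEq hs).symm⟩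

/-- Lemma 2.9: for the autonomous problem (54), the maximum value `u(0)`
uniquely identifies the solution pair `(λ, u)`. -/
theorem stmt7 (p : ℝ) (hp : 1 < p) (n : ℕ) (hn : 1 ≤ n)
    (f : ℝ → ℝ) (hf : ContDiffOn ℝ 1 f (Set.Ici 0))
    (hsign : (∀ v > (0:ℝ), 0 < f v) ∨
      ∃ γ > (0:ℝ), (∀ v ∈ Set.Ioo (0:ℝ) γ, f v < 0) ∧ (∀ v > γ, 0 < f v))
    (lam₁ lam₂ : ℝ) (hlam₁ : 0 < lam₁) (hlam₂ : 0 < lam₂)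
    (u₁ u₂ : ℝ → ℝ)
    (hu₁ : RadialSol p n (fun _ v => lam₁ * f v) u₁)
    (hu₂ : RadialSol p n (fun _ v => lam₂ * f v) u₂)
    (hmax : u₁ 0 = u₂ 0) :
    lam₁ = lam₂ ∧ Set.EqOn u₁ u₂ (Set.Icc 0 1) := by
  exact stmt7' p hp n hn f hf hsign lam₁ lam₂ hlam₁ hlam₂ u₁ u₂ hu₁ hu₂ hmax
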